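/- The complete enumeration of all total recursive functions is not computable in the limit by any l-total property: there is no l-total limiting-computable P such that every index j with φ_j total equals P(x) for some x. -/

import Mathlib

open Nat.Partrec (Code)

/-- `φ i` is the partial recursive function with index `i`. -/
def φ (i : ℕ) : ℕ →. ℕ := (Denumerable.ofNat Code i).eval

/-- `LConv ψ x v`: the guessing function `ψ` on input `x` l-converges in the limit to `v`:
there is a `u` with `ψ x u = v` and for all `t > u`, `ψ x t = v` whenever it converges. -/
def LConv (ψ : ℕ → ℕ →. ℕ) (x v : ℕ) : Prop :=
  ∃ u, v ∈ ψ x u ∧ ∀ t, u < t → ∀ w ∈ ψ x t, w = v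

namespace Stmt12Aux

open Nat.Partrec.Code

/-- The largest `t ≤ s` such that `evaln s c₀ (pair x t)` halts (0 if none). -/
def mh (c₀ : Code) (x s : ℕ) : ℕ :=
  Nat.findGreatest (fun t => (evaln s c₀ (Nat.pair x t)).isSome = true) s

/-- The "best guess so far" function: the value of the latest halting guess found by stage s. -/
def ψ' (c₀ : Code) (x s : ℕ) : Option ℕ :=
  evaln s c₀ (Nat.pair x (mh c₀ x s))

/-- The Σ₂ matrix: `∃ n ∀ k, Dprop c₀ j n k` says `j` is the limit of `ψ'` on some input. -/
def Dprop (c₀ : Code) (j n k : ℕ) : Prop :=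
  ψ' c₀ n.unpair.1 n.unpair.2 = some j ∧
    (ψ' c₀ n.unpair.1 (n.unpair.2 + k + 1)).getD j = j

instance (c₀ : Code) (j n k : ℕ) : Decidable (Dprop c₀ j n k) := by
  unfold Dprop; infer_instance

theorem evaln_pr (c₀ : Code) :
    Primrec fun a : (ℕ × ℕ) × ℕ => evaln a.1.2 c₀ (Nat.pair a.1.1 a.2) :=
  primrec_evaln.comp <|
    ((Primrec.snd.comp .fst).pair (.const c₀)).pair
      (Primrec₂.natPair.comp (Primrec.fst.comp .fst) .snd)

theorem mh_pr (c₀ : Code) : Primrec fun a : ℕ × ℕ => mh c₀ a.1 a.2 :=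
  Primrec.nat_findGreatest .snd <|
    Primrec.eq.comp₂ (Primrec.option_isSome.comp (evaln_pr c₀)).to₂ (Primrec₂.const true)

theorem ψ'_pr (c₀ : Code) : Primrec fun a : ℕ × ℕ => ψ' c₀ a.1 a.2 :=
  primrec_evaln.comp <|
    (Primrec.snd.pair (.const c₀)).pair
      (Primrec₂.natPair.comp .fst (mh_pr c₀))

theorem Dprop_pr (c₀ : Code) :
    PrimrecPred fun q : (ℕ × ℕ) × ℕ => Dprop c₀ q.1.1 q.1.2 q.2 := by
  have hx : Primrec fun q : (ℕ × ℕ) × ℕ => (Nat.unpair q.1.2).1 :=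
    Primrec.fst.comp (Primrec.unpair.comp (Primrec.snd.comp .fst))
  have hu : Primrec fun q : (ℕ × ℕ) × ℕ => (Nat.unpair q.1.2).2 :=
    Primrec.snd.comp (Primrec.unpair.comp (Primrec.snd.comp .fst))
  have hj : Primrec fun q : (ℕ × ℕ) × ℕ => q.1.1 := Primrec.fst.comp .fst
  have h1 : PrimrecPred fun q : (ℕ × ℕ) × ℕ =>
      ψ' c₀ (Nat.unpair q.1.2).1 (Nat.unpair q.1.2).2 = some q.1.1 :=
    Primrec.eq.comp ((ψ'_pr c₀).comp (hx.pair hu)) (Primrec.option_some.comp hj)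
  have h2 : PrimrecPred fun q : (ℕ × ℕ) × ℕ =>
      (ψ' c₀ (Nat.unpair q.1.2).1 ((Nat.unpair q.1.2).2 + q.2 + 1)).getD q.1.1 = q.1.1 :=
    Primrec.eq.comp
      (Primrec.option_getD.comp
        ((ψ'_pr c₀).comp (hx.pair
          (Primrec.nat_add.comp (Primrec.nat_add.comp hu .snd) (.const 1)))) hj) hj
  exact h1.and h2

end Stmt12Aux

open Stmt12Aux Nat.Partrec.Code

theorem stmt12 :
    ¬ ∃ (P : ℕ → ℕ) (ψ : ℕ → ℕ →. ℕ), Partrec₂ ψ ∧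
      (∀ x, LConv ψ x (P x)) ∧
      (∀ x m, ((φ (P x)) m).Dom) ∧
      (∀ j, (∀ m, ((φ j) m).Dom) → ∃ x, P x = j) := by
  rintro ⟨P, ψ, hψ, hL, hT, hO⟩
  -- a code for the (uncurried) guessing function
  have hψ1 : Nat.Partrec fun n : ℕ => ψ n.unpair.1 n.unpair.2 :=
    Partrec.nat_iff.1 <|
      hψ.comp (Computable.fst.comp .unpair) (Computable.snd.comp .unpair)
  obtain ⟨c₀, hc₀⟩ := exists_code.1 hψ1
  have hev : ∀ x t, ψ x t = eval c₀ (Nat.pair x t) := by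
    intro x t; rw [hc₀]; simp
  -- (A): ψ' converges (totally, past some stage) to P x
  have hA : ∀ x, ∃ s₀, ∀ s, s₀ ≤ s → ψ' c₀ x s = some (P x) := by
    intro x
    obtain ⟨u, hu, hst⟩ := hL x
    rw [hev] at hu
    obtain ⟨k, hk⟩ := evaln_complete.1 hu
    refine ⟨max k u, fun s hs => ?_⟩
    have hks : k ≤ s := le_trans (le_max_left _ _) hs
    have hus : u ≤ s := le_trans (le_max_right _ _) hs
    have hk' : P x ∈ evaln s c₀ (Nat.pair x u) := evaln_mono hks hk
    have hPu : (evaln s c₀ (Nat.pair x u)).isSome = true := by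
      rw [Option.mem_def] at hk'; rw [hk']; rfl
    have hle : u ≤ mh c₀ x s := Nat.le_findGreatest (P := fun t => (evaln s c₀ (Nat.pair x t)).isSome = true) hus hPu
    have hPM : (evaln s c₀ (Nat.pair x (mh c₀ x s))).isSome = true :=
      Nat.findGreatest_spec (P := fun t => (evaln s c₀ (Nat.pair x t)).isSome = true) hus hPu
    obtain ⟨w, hw⟩ := Option.isSome_iff_exists.1 hPM
    have hwmem : w ∈ ψ x (mh c₀ x s) := by
      rw [hev]; exact evaln_sound (by rw [Option.mem_def]; exact hw)
    have hwP : w = P x := by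
      rcases lt_or_eq_of_le hle with h | h
      · exact hst _ h _ hwmem
      · rw [Option.mem_def] at hk'
        rw [← h] at hw; rw [hk'] at hw; exact (Option.some_inj.1 hw).symm
    show evaln s c₀ (Nat.pair x (mh c₀ x s)) = some (P x)
    rw [hw, hwP]
  -- (B): the Σ₂ characterization of totality
  have hB : ∀ j, (∀ m, ((φ j) m).Dom) ↔ ∃ n, ∀ k, Dprop c₀ j n k := by
    intro j
    constructor
    · intro hj
      obtain ⟨x, hx⟩ := hO j hj
      obtain ⟨s₀, hs₀⟩ := hA x
      refine ⟨Nat.pair x s₀, fun k => ?_⟩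
      constructor
      · simp only [Nat.unpair_pair]
        rw [hs₀ s₀ le_rfl, hx]
      · simp only [Nat.unpair_pair]
        rw [hs₀ (s₀ + k + 1) (by omega), hx]
        rfl
    · rintro ⟨n, hn⟩
      obtain ⟨s₀, hs₀⟩ := hA n.unpair.1
      have h2 := (hn s₀).2
      rw [hs₀ (n.unpair.2 + s₀ + 1) (by omega)] at h2
      have : P n.unpair.1 = j := h2
      intro m; rw [← this]; exact hT _ m
  -- the diagonal code, via the recursion theorem
  have hDb : Computable fun q : (Code × ℕ) × ℕ =>
      decide (¬ Dprop c₀ (Encodable.encode q.1.1) q.1.2 q.2) := by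
    have h := ((Dprop_pr c₀).comp
      (f := fun q : (Code × ℕ) × ℕ => ((Encodable.encode q.1.1, q.1.2), q.2))
      (((Primrec.encode.comp (Primrec.fst.comp .fst)).pair
        (Primrec.snd.comp .fst)).pair .snd)).not
    exact h.decide.to_comp
  have hf : Partrec₂ fun (c : Code) (n : ℕ) =>
      Nat.rfind fun k => Part.some (decide (¬ Dprop c₀ (Encodable.encode c) n k)) := by
    have hp : Partrec₂ fun (a : Code × ℕ) (k : ℕ) =>
        (Part.some (decide (¬ Dprop c₀ (Encodable.encode a.1) a.2 k)) : Part Bool) :=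
      Computable₂.partrec₂ (Computable₂.mk hDb)
    exact Partrec.rfind hp
  obtain ⟨c, hc⟩ := fixed_point₂ hf
  set j := Encodable.encode c with hj
  have hφj : ∀ m, φ j m =
      Nat.rfind fun k => Part.some (decide (¬ Dprop c₀ j m k)) := by
    intro m
    show (Denumerable.ofNat Code j).eval m = _
    rw [hj, Denumerable.ofNat_encode, hc]
  have hDom : ∀ m, ((φ j) m).Dom ↔ ∃ k, ¬ Dprop c₀ j m k := by
    intro m
    rw [hφj m]
    refine Nat.rfind_dom.trans ?_
    constructor
    · rintro ⟨k, hk, -⟩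
      exact ⟨k, by simpa using hk⟩
    · rintro ⟨k, hk⟩
      exact ⟨k, by simpa using hk, fun _ => trivial⟩
  by_cases hTj : ∀ m, ((φ j) m).Dom
  · obtain ⟨n, hn⟩ := (hB j).1 hTj
    obtain ⟨k, hk⟩ := (hDom n).1 (hTj n)
    exact hk (hn k)
  · apply hTj
    rw [hB]
    push_neg at hTj
    obtain ⟨m, hm⟩ := hTj
    rw [hDom] at hm
    push_neg at hm
    exact ⟨m, hm⟩
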